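/- Let r_1, …, r_n be a list of c-tuples (table rows) sorted in lexicographic order, where the t-th column takes n_t distinct values among the rows. Encode column i with unary codes: each of its n_i distinct values is assigned a distinct bit vector of length n_i with exactly one 1-bit, and for each code position p form the bitmap whose j-th bit is the p-th bit of the code of the i-th component of r_j. Fix a word length w ≥ 1 with w dividing n. Then the total number of dirty words over the n_i bitmaps of column i is at most 2·n_1·n_2·⋯·n_i. -/

import Mathlib

open scoped Classical

/-- Lexicographic (non-strict) order on rows `∀ t : Fin c, V t`: two rows are
related when they are equal or the first component where they differ is smaller
in the left row. -/
def lexLe {c : ℕ} {V : Fin c → Type*} [∀ t, LinearOrder (V t)]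
    (x y : ∀ t, V t) : Prop :=
  x = y ∨ ∃ j : Fin c, (∀ i, i < j → x i = y i) ∧ x j < y j

/-- The number of distinct values of column `t` occurring among the first `n` rows. -/
noncomputable def nvals (n : ℕ) {c : ℕ} {V : Fin c → Type*}
    (row : ℕ → ∀ t, V t) (t : Fin c) : ℕ :=
  ((Finset.range n).image (fun j => row j t)).card

section prefixOrder

variable {c : ℕ} {V : Fin c → Type*} [∀ t, LinearOrder (V t)] (i : Fin c)

/-- Strict lexicographic order on the prefix of columns `≤ i`. -/
def pLt (x y : ∀ t, V t) : Prop :=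
  ∃ t : Fin c, t ≤ i ∧ (∀ s, s < t → x s = y s) ∧ x t < y t

/-- Non-strict lexicographic order on the prefix of columns `≤ i`. -/
def pLe (x y : ∀ t, V t) : Prop :=
  (∀ t, t ≤ i → x t = y t) ∨ pLt i x y

lemma lexLe_pLe {x y : ∀ t, V t} (h : lexLe x y) : pLe i x y := by
  rcases h with rfl | ⟨j, hj, hlt⟩
  · exact Or.inl fun t _ => rfl
  · rcases le_or_gt j i with hji | hij
    · exact Or.inr ⟨j, hji, hj, hlt⟩
    · exact Or.inl fun t ht => hj t (lt_of_le_of_lt ht hij)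

lemma pLe_pLt {x y z : ∀ t, V t} (hxy : pLe i x y) (hyz : pLt i y z) : pLt i x z := by
  obtain ⟨t, hti, heq, hlt⟩ := hyz
  rcases hxy with hall | ⟨s, hsi, heq', hlt'⟩
  · exact ⟨t, hti, fun u hu => (hall u (le_of_lt (lt_of_lt_of_le hu hti))).trans (heq u hu),
      (hall t hti) ▸ hlt⟩
  · rcases lt_trichotomy s t with hst | rfl | hts
    · exact ⟨s, hsi, fun u hu => (heq' u hu).trans (heq u (hu.trans hst)),
        lt_of_lt_of_le hlt' (le_of_eq (heq s hst))⟩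
    · exact ⟨s, hsi, fun u hu => (heq' u hu).trans (heq u hu), hlt'.trans hlt⟩
    · exact ⟨t, hti, fun u hu => (heq' u (hu.trans hts)).trans (heq u hu),
        lt_of_le_of_lt (le_of_eq (heq' t hts)) hlt⟩

lemma pLt_ne {x y : ∀ t, V t} (h : pLt i x y) : ∃ t : Fin c, t ≤ i ∧ x t ≠ y t := by
  obtain ⟨t, hti, _, hlt⟩ := h
  exact ⟨t, hti, ne_of_lt hlt⟩

end prefixOrder

/-- Per-word bound: the number of values `p` whose indicator is non-constant on
a window of length `w` is at most twice the number of change points in that window. -/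
lemma seq_dirty_le (g : ℕ → ℕ) (w N : ℕ) :
    ((Finset.range N).filter (fun p => ∃ j₁ ∈ Finset.range w, ∃ j₂ ∈ Finset.range w,
        decide (g j₁ = p) ≠ decide (g j₂ = p))).card
      ≤ 2 * ((Finset.range (w-1)).filter (fun j => g j ≠ g (j+1))).card := by
  classical
  set Ch := (Finset.range (w-1)).filter (fun j => g j ≠ g (j+1)) with hCh
  rcases Nat.eq_zero_or_pos Ch.card with hK | hK
  · -- no changes: g is constant on [0, w), so nothing is dirty
    have hempty : Ch = ∅ := Finset.card_eq_zero.mp hK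
    have hstep : ∀ j, j < w - 1 → g j = g (j+1) := by
      intro j hj
      by_contra hne
      have : j ∈ Ch := by
        rw [hCh]; exact Finset.mem_filter.mpr ⟨Finset.mem_range.mpr hj, hne⟩
      rw [hempty] at this; exact absurd this (Finset.notMem_empty j)
    have hconst : ∀ j, j < w → g j = g 0 := by
      intro j
      induction j with
      | zero => intro _; rfl
      | succ j ih =>
        intro hj
        have h1 : j < w - 1 := by omega
        rw [← hstep j h1]
        exact ih (by omega)
    have : ((Finset.range N).filter (fun p => ∃ j₁ ∈ Finset.range w, ∃ j₂ ∈ Finset.range w,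
        decide (g j₁ = p) ≠ decide (g j₂ = p))) = ∅ := by
      apply Finset.filter_eq_empty_iff.mpr
      intro p _
      push_neg
      intro j₁ hj₁ j₂ hj₂
      rw [hconst j₁ (Finset.mem_range.mp hj₁), hconst j₂ (Finset.mem_range.mp hj₂)]
    rw [this]; simp
  · -- at least one change: dirty values lie in the image, which has ≤ K+1 elements
    have hsub : ((Finset.range N).filter (fun p => ∃ j₁ ∈ Finset.range w, ∃ j₂ ∈ Finset.range w,
        decide (g j₁ = p) ≠ decide (g j₂ = p))) ⊆ (Finset.range w).image g := by
      intro p hp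
      obtain ⟨-, j₁, hj₁, j₂, hj₂, hne⟩ := Finset.mem_filter.mp hp
      rcases Bool.eq_false_or_eq_true (decide (g j₁ = p)) with h1 | h1
      · exact Finset.mem_image.mpr ⟨j₁, hj₁, of_decide_eq_true h1⟩
      · have h2 : decide (g j₂ = p) = true := by
          rcases Bool.eq_false_or_eq_true (decide (g j₂ = p)) with h2 | h2
          · exact h2
          · exact absurd (h1.trans h2.symm) hne
        exact Finset.mem_image.mpr ⟨j₂, hj₂, of_decide_eq_true h2⟩
    have himg : ((Finset.range w).image g).card ≤ Ch.card + 1 := by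
      have hex : ∀ v ∈ (Finset.range w).image g, ∃ j, g j = v := by
        intro v hv
        obtain ⟨j, _, hj⟩ := Finset.mem_image.mp hv
        exact ⟨j, hj⟩
      set m : ℕ → ℕ := fun v => if h : ∃ j, g j = v then Nat.find h else 0 with hm
      have hmspec : ∀ v, (h : ∃ j, g j = v) → g (m v) = v ∧ ∀ k < m v, g k ≠ v := by
        intro v h
        rw [hm]; simp only [dif_pos h]
        exact ⟨Nat.find_spec h, fun k hk => Nat.find_min h hk⟩
      have hcard : ((Finset.range w).image g).card ≤ (insert 0 (Ch.image (·+1))).card := by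
        apply Finset.card_le_card_of_injOn m
        · intro v hv
          have h := hex v hv
          obtain ⟨hspec, hmin⟩ := hmspec v h
          rcases Nat.eq_zero_or_pos (m v) with h0 | h0
          · rw [h0]; exact Finset.mem_insert_self 0 _
          · apply Finset.mem_insert_of_mem
            refine Finset.mem_image.mpr ⟨m v - 1, ?_, by omega⟩
            obtain ⟨j, hjw, hjv⟩ := Finset.mem_image.mp hv
            have hmle : m v ≤ j := by
              by_contra hc
              exact hmin j (by omega) hjv
            rw [hCh]
            refine Finset.mem_filter.mpr ⟨Finset.mem_range.mpr (by
              have := Finset.mem_range.mp hjw; omega), ?_⟩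
            have h1 : m v - 1 + 1 = m v := by omega
            rw [h1, hspec]
            exact hmin (m v - 1) (by omega)
        · intro v hv v' hv' heq
          obtain ⟨hs, _⟩ := hmspec v (hex v hv)
          obtain ⟨hs', _⟩ := hmspec v' (hex v' hv')
          rw [← hs, ← hs', heq]
      calc ((Finset.range w).image g).card ≤ (insert 0 (Ch.image (·+1))).card := hcard
        _ ≤ (Ch.image (·+1)).card + 1 := Finset.card_insert_le _ _
        _ ≤ Ch.card + 1 := by
            have := Finset.card_image_le (s := Ch) (f := (·+1)); omega
    calc ((Finset.range N).filter _).card ≤ ((Finset.range w).image g).card :=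
          Finset.card_le_card hsub
      _ ≤ Ch.card + 1 := himg
      _ ≤ 2 * Ch.card := by omega

/-- Let `row 0, …, row (n-1)` be rows (`c`-tuples) sorted lexicographically, with
`n_t = nvals n row t` distinct values in column `t`. Encode column `i` with unary
codes: each occurring value `v` of column `i` gets the bit vector of length `n_i`
whose only 1-bit is at position `pos v < n_i`, distinct occurring values getting
distinct positions. The bitmap for code position `p` has `j`-th bit
`decide (pos (row j i) = p)` and is partitioned into `n / w` words of `w`
consecutive bits (`w ≥ 1`, `w ∣ n`); a word is dirty when its bits are not all
equal. Then the total number of dirty words over the `n_i` bitmaps of column `i`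
is at most `2 · n_1 ⋯ n_i`. -/
theorem dirty_words_le_of_lex_sorted_table (n c w : ℕ) (hw : 1 ≤ w) (hdvd : w ∣ n)
    (V : Fin c → Type*) [∀ t, LinearOrder (V t)]
    (row : ℕ → ∀ t, V t)
    (hsorted : ∀ j k : ℕ, j ≤ k → k < n → lexLe (row j) (row k))
    (i : Fin c) (pos : V i → ℕ)
    (hposlt : ∀ j < n, pos (row j i) < nvals n row i)
    (hposinj : ∀ j < n, ∀ k < n, pos (row j i) = pos (row k i) → row j i = row k i) :
    ∑ p ∈ Finset.range (nvals n row i),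
      ((Finset.range (n / w)).filter (fun q =>
        ∃ j₁ ∈ Finset.range w, ∃ j₂ ∈ Finset.range w,
          decide (pos (row (q * w + j₁) i) = p) ≠ decide (pos (row (q * w + j₂) i) = p))).card
      ≤ 2 * ∏ t ∈ Finset.univ.filter (fun t : Fin c => t ≤ i), nvals n row t := by
  classical
  have hword : ∀ q, q < n / w → q * w + w ≤ n := by
    intro q hq
    have h2 : (q + 1) * w ≤ (n / w) * w := Nat.mul_le_mul_right _ hq
    have h3 : (n / w) * w = n := Nat.div_mul_cancel hdvd
    calc q * w + w = (q + 1) * w := by ring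
      _ ≤ (n / w) * w := h2
      _ = n := h3
  -- the per-word count of change points within word `q`
  set K : ℕ → ℕ := fun q => ((Finset.range (w-1)).filter
    (fun j => pos (row (q*w+j) i) ≠ pos (row (q*w+j+1) i))).card with hK
  -- the global set of change points
  set Cf : Finset ℕ := (Finset.range (n-1)).filter
    (fun j => pos (row j i) ≠ pos (row (j+1) i)) with hCf
  have swap : ∑ p ∈ Finset.range (nvals n row i),
      ((Finset.range (n / w)).filter (fun q =>
        ∃ j₁ ∈ Finset.range w, ∃ j₂ ∈ Finset.range w,
          decide (pos (row (q * w + j₁) i) = p) ≠ decide (pos (row (q * w + j₂) i) = p))).card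
      = ∑ q ∈ Finset.range (n / w),
        ((Finset.range (nvals n row i)).filter (fun p =>
          ∃ j₁ ∈ Finset.range w, ∃ j₂ ∈ Finset.range w,
            decide (pos (row (q * w + j₁) i) = p) ≠ decide (pos (row (q * w + j₂) i) = p))).card := by
    simp_rw [Finset.card_filter]
    exact Finset.sum_comm
  have stepB : ∀ q, ((Finset.range (nvals n row i)).filter (fun p =>
          ∃ j₁ ∈ Finset.range w, ∃ j₂ ∈ Finset.range w,
            decide (pos (row (q * w + j₁) i) = p) ≠ decide (pos (row (q * w + j₂) i) = p))).card
        ≤ 2 * K q := by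
    intro q
    exact seq_dirty_le (fun j => pos (row (q * w + j) i)) w (nvals n row i)
  have stepC : ∑ q ∈ Finset.range (n / w), K q ≤ Cf.card := by
    rw [hK, ← Finset.card_sigma]
    apply Finset.card_le_card_of_injOn (fun x => x.1 * w + x.2)
    · rintro ⟨q, j⟩ hx
      obtain ⟨hq, hj⟩ := Finset.mem_sigma.mp hx
      dsimp only at hq hj
      show q * w + j ∈ Cf
      obtain ⟨hjr, hjne⟩ := Finset.mem_filter.mp hj
      have hqw := hword q (Finset.mem_range.mp hq)
      have hjw := Finset.mem_range.mp hjr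
      rw [hCf]
      exact Finset.mem_filter.mpr ⟨Finset.mem_range.mpr (by omega), hjne⟩
    · rintro ⟨q, j⟩ hx ⟨q', j'⟩ hy heq
      obtain ⟨hq, hj⟩ := Finset.mem_sigma.mp hx
      obtain ⟨hq', hj'⟩ := Finset.mem_sigma.mp hy
      have hjw : j < w - 1 := Finset.mem_range.mp (Finset.mem_filter.mp hj).1
      have hjw' : j' < w - 1 := Finset.mem_range.mp (Finset.mem_filter.mp hj').1
      simp only at heq
      have e1 : q = q' := by
        have h := congrArg (· / w) heq
        simp only [Nat.mul_comm _ w] at h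
        rw [Nat.mul_add_div hw, Nat.mul_add_div hw,
          Nat.div_eq_of_lt (by omega), Nat.div_eq_of_lt (by omega)] at h
        simpa using h
      subst e1
      have e2 : j = j' := by omega
      subst e2
      rfl
  have stepD : Cf.card ≤ ∏ t ∈ Finset.univ.filter (fun t : Fin c => t ≤ i), nvals n row t := by
    have hprod : ∏ t ∈ Finset.univ.filter (fun t : Fin c => t ≤ i), nvals n row t
        = (Fintype.piFinset (fun t : {t : Fin c // t ≤ i} =>
            (Finset.range n).image (fun j => row j t.1))).card := by
      rw [Fintype.card_piFinset,
        Finset.prod_subtype (p := fun t : Fin c => t ≤ i)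
          (Finset.univ.filter (fun t : Fin c => t ≤ i))
          (by simp) (fun t => nvals n row t)]
      apply Finset.prod_congr rfl
      intro t _
      unfold nvals
      congr!
    rw [hprod]
    apply Finset.card_le_card_of_injOn
      (fun j => (fun t : {t : Fin c // t ≤ i} => row (j+1) t.1))
    · intro j hj
      obtain ⟨hjr, -⟩ := Finset.mem_filter.mp (hCf ▸ hj)
      have hj1 : j + 1 < n := by have := Finset.mem_range.mp hjr; omega
      rw [Finset.mem_coe, Fintype.mem_piFinset]
      intro t
      exact Finset.mem_image.mpr ⟨j+1, Finset.mem_range.mpr hj1, rfl⟩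
    · have key : ∀ j k : ℕ, j ∈ Cf → k ∈ Cf → j < k →
          (fun t : {t : Fin c // t ≤ i} => row (j+1) t.1)
            ≠ (fun t : {t : Fin c // t ≤ i} => row (k+1) t.1) := by
        intro j k hj hk hjk heq
        obtain ⟨hjr, hjne⟩ := Finset.mem_filter.mp (hCf ▸ hj)
        obtain ⟨hkr, hkne⟩ := Finset.mem_filter.mp (hCf ▸ hk)
        have hkn : k + 1 < n := by have := Finset.mem_range.mp hkr; omega
        have hrne : row k i ≠ row (k+1) i := fun h => hkne (congrArg pos h)
        have h1 : pLt i (row k) (row (k+1)) := by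
          rcases lexLe_pLe i (hsorted k (k+1) (by omega) hkn) with hall | h
          · exact absurd (hall i le_rfl) hrne
          · exact h
        have h2 : pLe i (row (j+1)) (row k) :=
          lexLe_pLe i (hsorted (j+1) k (by omega) (by omega))
        obtain ⟨t, hti, htne⟩ := pLt_ne i (pLe_pLt i h2 h1)
        exact htne (congrFun heq ⟨t, hti⟩)
      intro j hj k hk heq
      rcases lt_trichotomy j k with h | h | h
      · exact absurd heq (key j k hj hk h)
      · exact h
      · exact absurd heq.symm (key k j hk hj h)
  calc ∑ p ∈ Finset.range (nvals n row i),
      ((Finset.range (n / w)).filter (fun q =>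
        ∃ j₁ ∈ Finset.range w, ∃ j₂ ∈ Finset.range w,
          decide (pos (row (q * w + j₁) i) = p) ≠ decide (pos (row (q * w + j₂) i) = p))).card
      = ∑ q ∈ Finset.range (n / w),
        ((Finset.range (nvals n row i)).filter (fun p =>
          ∃ j₁ ∈ Finset.range w, ∃ j₂ ∈ Finset.range w,
            decide (pos (row (q * w + j₁) i) = p) ≠ decide (pos (row (q * w + j₂) i) = p))).card := swap
    _ ≤ ∑ q ∈ Finset.range (n / w), 2 * K q := Finset.sum_le_sum fun q _ => stepB q
    _ = 2 * ∑ q ∈ Finset.range (n / w), K q := (Finset.mul_sum _ _ _).symm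
    _ ≤ 2 * Cf.card := Nat.mul_le_mul_left 2 stepC
    _ ≤ 2 * ∏ t ∈ Finset.univ.filter (fun t : Fin c => t ≤ i), nvals n row t :=
        Nat.mul_le_mul_left 2 stepD
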